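/- arXiv:1910.13544 — 3 statements merged into one kernel-verified Lean document; each statement's English description precedes it below -/
import Mathlib

section
/- Let γ > 0. If v₁, v₂ ∈ H^1(0,∞) are both weak solutions of v'' − γv − v³ + u = 0 for the same u ∈ H^1(0,∞), then v₁ = v₂. -/
open MeasureTheory Set Filter

/-- Membership in `H¹(0,∞)`. -/
def InH1 (z z' : ℝ → ℝ) : Prop :=
  (∀ x ∈ Ioi (0:ℝ), HasDerivAt z (z' x) x) ∧
  MemLp z 2 (volume.restrict (Ioi (0:ℝ))) ∧
  MemLp z' 2 (volume.restrict (Ioi (0:ℝ)))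

lemma l2_mul_integrable {f g : ℝ → ℝ} {μ : Measure ℝ}
    (hf : MemLp f 2 μ) (hg : MemLp g 2 μ) :
    Integrable (fun x => f x * g x) μ := by
  have h : MemLp (f • g) 1 μ := hg.smul hf (hpqr := ⟨by simpa using ENNReal.inv_two_add_inv_two⟩)
  exact (memLp_one_iff_integrable.mp h)

lemma InH1.contOn {z z' : ℝ → ℝ} (h : InH1 z z') : ContinuousOn z (Ioi 0) :=
  fun x hx => ((h.1 x hx).continuousAt).continuousWithinAt

/-- Sobolev-type bound: an `H¹(0,∞)` function has square bounded. -/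
lemma InH1.sq_bound {z z' : ℝ → ℝ} (h : InH1 z z') :
    ∃ C : ℝ, ∀ x ∈ Ioi (0:ℝ), z x ^ 2 ≤ C := by
  obtain ⟨hd, hz, hz'⟩ := h
  have hzz' : Integrable (fun x => 2 * z x * z' x) (volume.restrict (Ioi 0)) := by
    simpa [mul_assoc] using ((l2_mul_integrable hz hz').const_mul 2)
  refine ⟨∫ x in Ioi (0:ℝ), |2 * z x * z' x|, fun x hx => ?_⟩
  have habs : Integrable (fun x => |2 * z x * z' x|) (volume.restrict (Ioi 0)) := hzz'.abs
  refine le_of_forall_pos_le_add (fun ε hε => ?_)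
  -- find y > 0 with z y ^ 2 < ε
  have hsq : Integrable (fun y => z y ^ 2) (volume.restrict (Ioi 0)) := hz.integrable_sq
  have hy : ∃ y ∈ Ioi (0:ℝ), z y ^ 2 < ε := by
    by_contra hcon
    push_neg at hcon
    have : Integrable (fun _ : ℝ => ε) (volume.restrict (Ioi 0)) := by
      refine hsq.mono' aestronglyMeasurable_const ?_
      filter_upwards [ae_restrict_mem measurableSet_Ioi] with y hy
      rw [Real.norm_eq_abs, abs_of_pos hε]
      exact hcon y hy
    rw [integrable_const_iff] at this
    rcases this with h0 | hfin
    · exact absurd h0 (ne_of_gt hε)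
    · have hfin := hfin.measure_univ_lt_top
      simp [Measure.restrict_apply_univ, Real.volume_Ioi] at hfin
  obtain ⟨y, hy0, hyε⟩ := hy
  -- FTC: z x ^ 2 - z y ^ 2 = ∫ t in y..x, 2 * z t * z' t
  have hderiv : ∀ t ∈ uIcc y x, HasDerivAt (fun s => z s ^ 2) (2 * z t * z' t) t := by
    intro t ht
    have ht0 : t ∈ Ioi (0:ℝ) := by
      rcases le_total y x with hle | hle
      · rw [uIcc_of_le hle] at ht; exact lt_of_lt_of_le hy0 ht.1
      · rw [uIcc_of_ge hle] at ht; exact lt_of_lt_of_le hx ht.1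
    have := (hd t ht0).pow 2
    simpa [mul_comm, mul_assoc, mul_left_comm] using (show HasDerivAt (fun s => z s ^ 2) _ t from this)
  have hint : IntervalIntegrable (fun t => 2 * z t * z' t) volume y x := by
    rw [intervalIntegrable_iff]
    refine IntegrableOn.mono_set hzz' ?_
    intro t ht
    rcases le_total y x with hle | hle
    · rw [uIoc_of_le hle] at ht; exact lt_trans hy0 ht.1
    · rw [uIoc_of_ge hle] at ht; exact lt_trans hx ht.1
  have hftc : ∫ t in y..x, 2 * z t * z' t = z x ^ 2 - z y ^ 2 :=
    intervalIntegral.integral_eq_sub_of_hasDerivAt hderiv hint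
  have hb : ∫ t in y..x, 2 * z t * z' t ≤ ∫ t in Ioi (0:ℝ), |2 * z t * z' t| := by
    have h1 : |∫ t in y..x, 2 * z t * z' t| ≤ ∫ t in uIoc y x, |2 * z t * z' t| := by
      calc |∫ t in y..x, 2 * z t * z' t| = |∫ t in uIoc y x, 2 * z t * z' t| :=
            intervalIntegral.abs_integral_eq_abs_integral_uIoc _
        _ ≤ ∫ t in uIoc y x, |2 * z t * z' t| := by
            simpa only [Real.norm_eq_abs] using norm_integral_le_integral_norm (μ := volume.restrict (uIoc y x)) (fun t => 2 * z t * z' t)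
    have h2 : ∫ t in uIoc y x, |2 * z t * z' t| ≤ ∫ t in Ioi (0:ℝ), |2 * z t * z' t| := by
      refine setIntegral_mono_set habs ?_ ?_
      · filter_upwards with t using abs_nonneg _
      · refine HasSubset.Subset.eventuallyLE ?_
        intro t ht
        rcases le_total y x with hle | hle
        · rw [uIoc_of_le hle] at ht; exact lt_trans hy0 ht.1
        · rw [uIoc_of_ge hle] at ht; exact lt_trans hx ht.1
    exact le_trans (le_abs_self _) (le_trans h1 h2)
  have := hftc ▸ hb
  linarith

lemma integrand_integrable (γ : ℝ) {v v' u u' w w' : ℝ → ℝ}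
    (hv : InH1 v v') (hu : InH1 u u') (hw : InH1 w w') :
    Integrable (fun x => v' x * w' x + γ * v x * w x + v x ^ 3 * w x - u x * w x)
      (volume.restrict (Ioi (0:ℝ))) := by
  have I1 := l2_mul_integrable hv.2.2 hw.2.2
  have I2 : Integrable (fun x => γ * v x * w x) (volume.restrict (Ioi (0:ℝ))) := by
    simpa [mul_assoc] using (l2_mul_integrable hv.2.1 hw.2.1).const_mul γ
  have I4 := l2_mul_integrable hu.2.1 hw.2.1
  have I3 : Integrable (fun x => v x ^ 3 * w x) (volume.restrict (Ioi (0:ℝ))) := by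
    obtain ⟨C, hC⟩ := hv.sq_bound
    have hb : Integrable (fun x => C * |v x * w x|) (volume.restrict (Ioi (0:ℝ))) :=
      ((l2_mul_integrable hv.2.1 hw.2.1).abs.const_mul C)
    refine hb.mono' ?_ ?_
    · exact ((hv.contOn.pow 3).mul hw.contOn).aestronglyMeasurable measurableSet_Ioi
    · filter_upwards [ae_restrict_mem measurableSet_Ioi] with x hx
      have h1 : v x ^ 2 ≤ C := hC x hx
      have h2 : |v x ^ 3 * w x| = v x ^ 2 * |v x * w x| := by
        rw [show v x ^ 3 * w x = v x ^ 2 * (v x * w x) by ring, abs_mul,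
          abs_of_nonneg (sq_nonneg _)]
      rw [Real.norm_eq_abs, h2]
      exact mul_le_mul_of_nonneg_right h1 (abs_nonneg _)
  exact ((I1.add I2).add I3).sub I4

set_option maxHeartbeats 1000000 in
/-- For `γ > 0`, if `v₁, v₂ ∈ H¹(0,∞)` are both weak solutions of
`v'' − γv − v³ + u = 0` for the same `u ∈ H¹(0,∞)`, then `v₁ = v₂` on `(0,∞)`. -/
theorem statement4
    (γ : ℝ) (hγ : 0 < γ) (u u' v₁ v₁' v₂ v₂' : ℝ → ℝ)
    (hu : InH1 u u') (hv₁ : InH1 v₁ v₁') (hv₂ : InH1 v₂ v₂')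
    (hweak₁ : ∀ φ φ' : ℝ → ℝ, InH1 φ φ' →
      ∫ x in Ioi (0:ℝ), (v₁' x * φ' x + γ * v₁ x * φ x + v₁ x ^ 3 * φ x - u x * φ x) = 0)
    (hweak₂ : ∀ φ φ' : ℝ → ℝ, InH1 φ φ' →
      ∫ x in Ioi (0:ℝ), (v₂' x * φ' x + γ * v₂ x * φ x + v₂ x ^ 3 * φ x - u x * φ x) = 0) :
    ∀ x ∈ Ioi (0:ℝ), v₁ x = v₂ x := by
  set w : ℝ → ℝ := fun x => v₁ x - v₂ x with hwdef
  set w' : ℝ → ℝ := fun x => v₁' x - v₂' x with hwdef'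
  have hw : InH1 w w' :=
    ⟨fun x hx => (hv₁.1 x hx).sub (hv₂.1 x hx), hv₁.2.1.sub hv₂.2.1, hv₁.2.2.sub hv₂.2.2⟩
  have h₁ := hweak₁ w w' hw
  have h₂ := hweak₂ w w' hw
  have If₁ := integrand_integrable γ hv₁ hu hw
  have If₂ := integrand_integrable γ hv₂ hu hw
  have Isub : Integrable (fun x =>
      (v₁' x * w' x + γ * v₁ x * w x + v₁ x ^ 3 * w x - u x * w x)
        - (v₂' x * w' x + γ * v₂ x * w x + v₂ x ^ 3 * w x - u x * w x))
      (volume.restrict (Ioi (0:ℝ))) := If₁.sub If₂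
  have hdiff : ∫ x in Ioi (0:ℝ),
      ((v₁' x * w' x + γ * v₁ x * w x + v₁ x ^ 3 * w x - u x * w x)
        - (v₂' x * w' x + γ * v₂ x * w x + v₂ x ^ 3 * w x - u x * w x)) = 0 := by
    rw [integral_sub If₁ If₂, h₁, h₂, sub_zero]
  have hwsq : Integrable (fun x => γ * w x ^ 2) (volume.restrict (Ioi (0:ℝ))) :=
    (hw.2.1.integrable_sq).const_mul γ
  have hle : (fun x => γ * w x ^ 2) ≤ (fun x =>
      (v₁' x * w' x + γ * v₁ x * w x + v₁ x ^ 3 * w x - u x * w x)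
        - (v₂' x * w' x + γ * v₂ x * w x + v₂ x ^ 3 * w x - u x * w x)) := by
    intro x
    simp only [hwdef, hwdef']
    nlinarith [sq_nonneg (v₁' x - v₂' x), sq_nonneg ((v₁ x - v₂ x) * (v₁ x + v₂ x)),
      sq_nonneg ((v₁ x - v₂ x) * v₁ x), sq_nonneg ((v₁ x - v₂ x) * v₂ x)]
  have hmono : ∫ x in Ioi (0:ℝ), γ * w x ^ 2 ≤ 0 := by
    calc ∫ x in Ioi (0:ℝ), γ * w x ^ 2
        ≤ ∫ x in Ioi (0:ℝ),
          ((v₁' x * w' x + γ * v₁ x * w x + v₁ x ^ 3 * w x - u x * w x)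
            - (v₂' x * w' x + γ * v₂ x * w x + v₂ x ^ 3 * w x - u x * w x)) :=
          integral_mono hwsq Isub hle
      _ = 0 := hdiff
  have hnonneg : 0 ≤ ∫ x in Ioi (0:ℝ), γ * w x ^ 2 :=
    integral_nonneg fun x => mul_nonneg hγ.le (sq_nonneg _)
  have hzero : ∫ x in Ioi (0:ℝ), w x ^ 2 = 0 := by
    have h0 : ∫ x in Ioi (0:ℝ), γ * w x ^ 2 = 0 := le_antisymm hmono hnonneg
    rw [integral_const_mul] at h0
    exact (mul_eq_zero.mp h0).resolve_left (ne_of_gt hγ)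
  have hae : (fun x => w x ^ 2) =ᵐ[volume.restrict (Ioi (0:ℝ))] 0 :=
    (integral_eq_zero_iff_of_nonneg (fun x => sq_nonneg _) hw.2.1.integrable_sq).mp hzero
  have hae2 : ∀ᵐ y ∂(volume : Measure ℝ), y ∈ Ioi (0:ℝ) → w y ^ 2 = 0 := by
    have := (ae_restrict_iff' measurableSet_Ioi).mp hae
    filter_upwards [this] with y hy hy'
    simpa using hy hy'
  intro x hx
  by_contra hne
  have hwx : w x ≠ 0 := sub_ne_zero.mpr hne
  have hcont : ContinuousAt w x := (hw.1 x hx).continuousAt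
  have hev : ∀ᶠ y in nhds x, w y ≠ 0 ∧ y ∈ Ioi (0:ℝ) :=
    (hcont.eventually_ne hwx).and (eventually_of_mem (Ioi_mem_nhds hx) fun y hy => hy)
  obtain ⟨ε, hε, hball⟩ := Metric.eventually_nhds_iff_ball.mp hev
  have hnull : volume {y : ℝ | ¬ (y ∈ Ioi (0:ℝ) → w y ^ 2 = 0)} = 0 := ae_iff.mp hae2
  have hsub : Metric.ball x ε ⊆ {y : ℝ | ¬ (y ∈ Ioi (0:ℝ) → w y ^ 2 = 0)} := by
    intro y hy
    obtain ⟨h1, h2⟩ := hball y hy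
    exact fun h => (pow_ne_zero 2 h1) (h h2)
  have hmz := measure_mono_null hsub hnull
  rw [Real.volume_ball] at hmz
  simp only [ENNReal.ofReal_eq_zero] at hmz
  linarith
end

section
/- Let γ > 0 and let N : H^1(0,∞) → H^3(0,∞) map w to the unique solution v of v'' − γv − v³ + w = 0 with v'(0)=0 and v → 0 at infinity. Then ‖Nw‖_{H^1(0,∞)} ≤ max{1, 1/γ} · ‖w‖_{L^2(0,∞)} for all w ∈ H^1(0,∞). -/
open MeasureTheory Set Filter

/-- Let `γ > 0` and let `v = Nw` be the solution of
`v'' − γv − v³ + w = 0` on `(0,∞)` with `v'(0) = 0` and decay at infinity.  Then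
`‖Nw‖_{H¹(0,∞)} ≤ max{1, 1/γ} ‖w‖_{L²(0,∞)}`. -/
theorem statement5
    (γ : ℝ) (hγ : 0 < γ) (w v v' v'' : ℝ → ℝ)
    (hw : MemLp w 2 (volume.restrict (Ioi (0:ℝ))))
    (hwH1 : ∃ w' : ℝ → ℝ, (∀ x ∈ Ioi (0:ℝ), HasDerivAt w (w' x) x) ∧
      MemLp w' 2 (volume.restrict (Ioi (0:ℝ))))
    (hderiv : ∀ x ∈ Ici (0:ℝ), HasDerivAt v (v' x) x)
    (hderiv' : ∀ x ∈ Ici (0:ℝ), HasDerivAt v' (v'' x) x)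
    (heq : ∀ x ∈ Ici (0:ℝ), v'' x - γ * v x - v x ^ 3 + w x = 0)
    (hneu : v' 0 = 0)
    (hdecay : Tendsto v atTop (nhds 0))
    (hv : MemLp v 2 (volume.restrict (Ioi (0:ℝ))))
    (hv' : MemLp v' 2 (volume.restrict (Ioi (0:ℝ)))) :
    Real.sqrt ((∫ x in Ioi (0:ℝ), v x ^ 2) + ∫ x in Ioi (0:ℝ), v' x ^ 2) ≤
      max 1 (1 / γ) * Real.sqrt (∫ x in Ioi (0:ℝ), w x ^ 2) := by
  clear hwH1
  set M : ℝ := max 1 (1 / γ) with hM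
  have hM1 : (1:ℝ) ≤ M := le_max_left _ _
  have hM0 : (0:ℝ) < M := lt_of_lt_of_le one_pos hM1
  -- boundedness of v on [0,∞)
  obtain ⟨C, hC⟩ : ∃ C : ℝ, ∀ x ∈ Ici (0:ℝ), |v x| ≤ C := by
    have h1 : ∀ᶠ x in atTop, |v x| ≤ 1 := by
      have := hdecay.abs
      rw [abs_zero] at this
      exact this.eventually (eventually_le_nhds one_pos)
    obtain ⟨R, hR⟩ := eventually_atTop.1 h1
    have hcomp : IsCompact (Icc (0:ℝ) (max R 0)) := isCompact_Icc
    have hcont : ContinuousOn v (Icc (0:ℝ) (max R 0)) := fun x hx =>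
      ((hderiv x hx.1).continuousAt).continuousWithinAt
    obtain ⟨C₁, hC₁⟩ := hcomp.exists_bound_of_continuousOn hcont
    refine ⟨max C₁ 1, fun x hx => ?_⟩
    rcases le_total x (max R 0) with h | h
    · exact le_trans (hC₁ x ⟨hx, h⟩) (le_max_left _ _)
    · exact le_trans (hR x (le_trans (le_max_left R 0) h)) (le_max_right _ _)
  -- measurability
  have hvm : AEStronglyMeasurable v (volume.restrict (Ioi (0:ℝ))) := hv.1
  have hv'm : AEStronglyMeasurable v' (volume.restrict (Ioi (0:ℝ))) := hv'.1
  have hwm : AEStronglyMeasurable w (volume.restrict (Ioi (0:ℝ))) := hw.1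
  -- integrabilities
  have Iv2 : Integrable (fun x => v x ^ 2) (volume.restrict (Ioi (0:ℝ))) :=
    hv.integrable_sq
  have Iv'2 : Integrable (fun x => v' x ^ 2) (volume.restrict (Ioi (0:ℝ))) :=
    hv'.integrable_sq
  have Iw2 : Integrable (fun x => w x ^ 2) (volume.restrict (Ioi (0:ℝ))) :=
    hw.integrable_sq
  have Iv4' : Integrable (fun x => v x ^ 4) (volume.restrict (Ioi (0:ℝ))) := by
    refine (Iv2.const_mul (C ^ 2)).mono' (hvm.pow 4) ?_
    filter_upwards [ae_restrict_mem measurableSet_Ioi] with x hx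
    have hb := hC x (mem_Ici.2 (le_of_lt (mem_Ioi.1 hx)))
    have h0 : (0:ℝ) ≤ |v x| := abs_nonneg _
    have h1 : v x ^ 2 ≤ C ^ 2 := by nlinarith [sq_abs (v x)]
    rw [Real.norm_eq_abs, abs_of_nonneg (by positivity : (0:ℝ) ≤ v x ^ 4)]
    nlinarith [mul_le_mul_of_nonneg_right h1 (sq_nonneg (v x))]
  have Iwv : Integrable (fun x => w x * v x) (volume.restrict (Ioi (0:ℝ))) := by
    refine Integrable.mono' ((Iw2.add Iv2).const_mul (1/2)) (hwm.mul hvm) ?_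
    filter_upwards with x
    simp only [Real.norm_eq_abs, abs_mul, Pi.add_apply]
    nlinarith [sq_nonneg (|w x| - |v x|), sq_abs (w x), sq_abs (v x),
      abs_nonneg (w x), abs_nonneg (v x)]
  have Ivv' : Integrable (fun x => v x * v' x) (volume.restrict (Ioi (0:ℝ))) := by
    refine Integrable.mono' ((Iv2.add Iv'2).const_mul (1/2)) (hvm.mul hv'm) ?_
    filter_upwards with x
    simp only [Real.norm_eq_abs, abs_mul, Pi.add_apply]
    nlinarith [sq_nonneg (|v x| - |v' x|), sq_abs (v x), sq_abs (v' x),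
      abs_nonneg (v x), abs_nonneg (v' x)]
  -- the derivative of g = v * v'
  set F : ℝ → ℝ := fun x => v' x ^ 2 + γ * v x ^ 2 + v x ^ 4 - w x * v x with hF
  have IF : Integrable F (volume.restrict (Ioi (0:ℝ))) :=
    ((Iv'2.add (Iv2.const_mul γ)).add Iv4').sub Iwv
  have hgderiv : ∀ x ∈ Ici (0:ℝ), HasDerivAt (fun y => v y * v' y) (F x) x := by
    intro x hx
    have h2 : v'' x = γ * v x + v x ^ 3 - w x := by have := heq x hx; linarith
    have h3 := (hderiv x hx).mul (hderiv' x hx)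
    refine HasDerivAt.congr_deriv h3 ?_
    rw [h2]; simp only [hF]; ring
  -- FTC on [0, x]
  have hftc : ∀ x : ℝ, 0 ≤ x → v x * v' x = ∫ t in (0:ℝ)..x, F t := by
    intro x hx
    have hint : IntervalIntegrable F volume 0 x := by
      rw [intervalIntegrable_iff_integrableOn_Ioc_of_le hx]
      exact MeasureTheory.IntegrableOn.mono_set IF Ioc_subset_Ioi_self
    have := intervalIntegral.integral_eq_sub_of_hasDerivAt
      (f := fun y => v y * v' y) (f' := F)
      (fun t ht => hgderiv t (by
        rcases ht with ⟨ht1, ht2⟩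
        simp only [min_eq_left hx, max_eq_right hx] at ht1 ht2
        exact ht1)) hint
    simp only [hneu, mul_zero, sub_zero] at this
    exact this.symm
  -- limit of v v' at infinity is the integral of F
  have htend : Tendsto (fun x => v x * v' x) atTop (nhds (∫ x in Ioi (0:ℝ), F x)) := by
    have h1 : Tendsto (fun x : ℝ => ∫ t in (0:ℝ)..x, F t) atTop
        (nhds (∫ x in Ioi (0:ℝ), F x)) :=
      intervalIntegral_tendsto_integral_Ioi 0 IF tendsto_id
    refine h1.congr' ?_
    filter_upwards [eventually_ge_atTop (0:ℝ)] with x hx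
    exact (hftc x hx).symm
  -- the limit must be zero since v v' is integrable
  have hL : (∫ x in Ioi (0:ℝ), F x) = 0 := by
    refine IntegrableAtFilter.eq_zero_of_tendsto
      ⟨Ioi 0, Ioi_mem_atTop 0, Ivv'⟩ ?_ htend
    intro s hs
    obtain ⟨a, ha⟩ := mem_atTop_sets.1 hs
    refine top_le_iff.1 ?_
    calc (⊤ : ENNReal) = volume (Ici a) := (Real.volume_Ici).symm
      _ ≤ volume s := measure_mono ha
  -- energy identity
  have key : (∫ x in Ioi (0:ℝ), v' x ^ 2) + γ * (∫ x in Ioi (0:ℝ), v x ^ 2)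
      + (∫ x in Ioi (0:ℝ), v x ^ 4) - (∫ x in Ioi (0:ℝ), w x * v x) = 0 := by
    have e1 : (∫ x in Ioi (0:ℝ), F x)
        = (∫ x in Ioi (0:ℝ), (v' x ^ 2 + γ * v x ^ 2 + v x ^ 4))
          - ∫ x in Ioi (0:ℝ), w x * v x :=
      integral_sub ((Iv'2.add (Iv2.const_mul γ)).add Iv4') Iwv
    have e2 : (∫ x in Ioi (0:ℝ), (v' x ^ 2 + γ * v x ^ 2 + v x ^ 4))
        = (∫ x in Ioi (0:ℝ), (v' x ^ 2 + γ * v x ^ 2)) + ∫ x in Ioi (0:ℝ), v x ^ 4 :=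
      integral_add (Iv'2.add (Iv2.const_mul γ)) Iv4'
    have e3 : (∫ x in Ioi (0:ℝ), (v' x ^ 2 + γ * v x ^ 2))
        = (∫ x in Ioi (0:ℝ), v' x ^ 2) + ∫ x in Ioi (0:ℝ), γ * v x ^ 2 :=
      integral_add Iv'2 (Iv2.const_mul γ)
    have e4 : (∫ x in Ioi (0:ℝ), γ * v x ^ 2) = γ * ∫ x in Ioi (0:ℝ), v x ^ 2 :=
      integral_const_mul γ _
    rw [e1, e2, e3, e4] at hL
    linarith
  -- Cauchy–Schwarz style bound: 2M ∫ wv ≤ M² ∫ w² + ∫ v²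
  have hCS : 2 * M * (∫ x in Ioi (0:ℝ), w x * v x)
      ≤ M ^ 2 * (∫ x in Ioi (0:ℝ), w x ^ 2) + (∫ x in Ioi (0:ℝ), v x ^ 2) := by
    calc 2 * M * (∫ x in Ioi (0:ℝ), w x * v x)
        = ∫ x in Ioi (0:ℝ), 2 * M * (w x * v x) := (integral_const_mul _ _).symm
      _ ≤ ∫ x in Ioi (0:ℝ), (M ^ 2 * w x ^ 2 + v x ^ 2) := by
          refine integral_mono (Iwv.const_mul _) ((Iw2.const_mul _).add Iv2) ?_
          intro x
          simp only [Pi.add_apply]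
          nlinarith [sq_nonneg (M * w x - v x), hM0.le]
      _ = M ^ 2 * (∫ x in Ioi (0:ℝ), w x ^ 2) + (∫ x in Ioi (0:ℝ), v x ^ 2) := by
          rw [integral_add (Iw2.const_mul _) Iv2, integral_const_mul]
  -- nonnegativity
  have hA : (0:ℝ) ≤ ∫ x in Ioi (0:ℝ), v x ^ 2 :=
    integral_nonneg (fun x => sq_nonneg _)
  have hB : (0:ℝ) ≤ ∫ x in Ioi (0:ℝ), v' x ^ 2 :=
    integral_nonneg (fun x => sq_nonneg _)
  have hQ : (0:ℝ) ≤ ∫ x in Ioi (0:ℝ), v x ^ 4 :=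
    integral_nonneg (fun x => by positivity)
  have hW : (0:ℝ) ≤ ∫ x in Ioi (0:ℝ), w x ^ 2 :=
    integral_nonneg (fun x => sq_nonneg _)
  -- min(1,γ) * M = 1
  have hminM : min 1 γ * M = 1 := by
    rcases le_total γ 1 with h | h
    · have h1 : min 1 γ = γ := min_eq_right h
      have h2 : M = 1 / γ := max_eq_right (by
        rw [le_div_iff₀ hγ]; linarith)
      rw [h1, h2]; field_simp
    · have h1 : min 1 γ = 1 := min_eq_left h
      have h2 : M = 1 := max_eq_left (by
        rw [div_le_one hγ]; exact h)
      rw [h1, h2]; ring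
  have hmin1 : min 1 γ ≤ 1 := min_le_left _ _
  have hminγ : min 1 γ ≤ γ := min_le_right _ _
  -- conclude: A + B ≤ M² W
  set A := ∫ x in Ioi (0:ℝ), v x ^ 2
  set B := ∫ x in Ioi (0:ℝ), v' x ^ 2
  set Q := ∫ x in Ioi (0:ℝ), v x ^ 4
  set W := ∫ x in Ioi (0:ℝ), w x ^ 2
  set P := ∫ x in Ioi (0:ℝ), w x * v x
  have hmain : A + B ≤ M ^ 2 * W := by
    have h1 : min 1 γ * (A + B) ≤ γ * A + B := by nlinarith
    have h2 : γ * A + B ≤ P := by nlinarith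
    have h3 : 2 * M * (min 1 γ * (A + B)) ≤ 2 * M * P := by nlinarith
    have h4 : 2 * M * (min 1 γ * (A + B)) = 2 * (A + B) := by
      rw [show 2 * M * (min 1 γ * (A + B)) = 2 * (min 1 γ * M) * (A + B) by ring,
        hminM]; ring
    nlinarith
  calc Real.sqrt (A + B) ≤ Real.sqrt (M ^ 2 * W) := Real.sqrt_le_sqrt hmain
    _ = M * Real.sqrt W := by
        rw [Real.sqrt_mul (sq_nonneg M), Real.sqrt_sq hM0.le]
end

section
/- Let γ > 0, 0 ≤ x ≤ x₂ ≤ ∞, and let g be a measurable function with 0 ≤ g ≤ M+1 supported in [x₂, ∞). Then for the Green's operator L of (−d²/dx² + γ) with Neumann condition at 0, the bound (Lg)(x) ≤ ((M+1)/γ) e^{−√γ x₂} cosh(√γ x) holds for all 0 ≤ x ≤ x₂, and consequently ∫₀^{x₂} Lg dx ≤ (M+1)/(2γ^{3/2}). -/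
open MeasureTheory Set Filter Real
open scoped Topology

lemma intExpIoi {a : ℝ} (ha : 0 < a) (c : ℝ) :
    ∫ s in Ioi c, Real.exp (-(a * s)) = Real.exp (-(a * c)) / a := by
  have hd : ∀ s ∈ Ici c, HasDerivAt (fun s => -Real.exp (-(a * s)) / a)
      (Real.exp (-(a * s))) s := by
    intro s _
    have h := (((hasDerivAt_id s).const_mul a).neg.exp).neg.div_const a
    simpa [mul_comm, ha.ne', mul_div_assoc, mul_div_cancel_left₀] using h
  have hint : IntegrableOn (fun s => Real.exp (-(a * s))) (Ioi c) := by
    simpa [neg_mul] using exp_neg_integrableOn_Ioi c ha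
  have ht : Tendsto (fun s => -Real.exp (-(a * s)) / a) atTop (𝓝 0) := by
    have h0 : Tendsto (fun s : ℝ => -(a * s)) atTop atBot := by
      simpa [neg_mul] using tendsto_id.const_mul_atTop_of_neg (r := -a) (by linarith)
    have h1 : Tendsto (fun s : ℝ => Real.exp (-(a * s))) atTop (𝓝 0) := by
      exact Real.tendsto_exp_comp_nhds_zero.2 h0
    have := (h1.neg).div_const a
    simpa using this
  have := integral_Ioi_of_hasDerivAt_of_tendsto' hd hint ht
  rw [this]; ring

lemma intCosh {a : ℝ} (ha : 0 < a) (c : ℝ) :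
    ∫ x in (0:ℝ)..c, Real.cosh (a * x) = Real.sinh (a * c) / a := by
  have hd : ∀ x ∈ Set.uIcc (0:ℝ) c, HasDerivAt (fun x => Real.sinh (a * x) / a)
      (Real.cosh (a * x)) x := by
    intro x _
    have h := (((hasDerivAt_id x).const_mul a).sinh).div_const a
    simpa [mul_comm, ha.ne', mul_div_assoc, mul_div_cancel_left₀] using h
  have hint : IntervalIntegrable (fun x => Real.cosh (a * x)) volume 0 c :=
    (Real.continuous_cosh.comp (continuous_const.mul continuous_id)).intervalIntegrable _ _
  rw [intervalIntegral.integral_eq_sub_of_hasDerivAt hd hint]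
  simp

/-- The Green's kernel `G(x,s) = (1/√γ) e^{−√γ max(x,s)} cosh(√γ min(x,s))`. -/
noncomputable def G (γ x s : ℝ) : ℝ :=
  (1 / Real.sqrt γ) * Real.exp (-(Real.sqrt γ * max x s)) * Real.cosh (Real.sqrt γ * min x s)

/-- The Green's operator `(Lw)(x) = ∫₀^∞ G(x,s) w(s) ds`. -/
noncomputable def Lop (γ : ℝ) (w : ℝ → ℝ) (x : ℝ) : ℝ :=
  ∫ s in Ioi (0:ℝ), G γ x s * w s

/-- For `γ > 0` and `g` measurable with `0 ≤ g ≤ M+1` supported in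
`[x₂,∞)`, one has `(Lg)(x) ≤ ((M+1)/γ) e^{−√γ x₂} cosh(√γ x)` for `0 ≤ x ≤ x₂`, and
`∫₀^{x₂} Lg ≤ (M+1)/(2γ^{3/2})`. -/
theorem statement11
    (γ : ℝ) (hγ : 0 < γ) (M x₂ : ℝ) (hx₂ : 0 ≤ x₂)
    (g : ℝ → ℝ) (hm : Measurable g)
    (hg : ∀ s, 0 ≤ g s ∧ g s ≤ M + 1)
    (hsupp : ∀ s, s < x₂ → g s = 0) :
    (∀ x ∈ Icc (0:ℝ) x₂,
      Lop γ g x ≤ (M + 1) / γ * Real.exp (-(Real.sqrt γ * x₂)) * Real.cosh (Real.sqrt γ * x)) ∧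
    (∫ x in (0:ℝ)..x₂, Lop γ g x) ≤ (M + 1) / (2 * γ * Real.sqrt γ) := by
  have h01 : 0 ≤ M + 1 := le_trans (hg 0).1 (hg 0).2
  set a := Real.sqrt γ with ha_def
  have ha : 0 < a := Real.sqrt_pos.2 hγ
  have haa : a * a = γ := Real.mul_self_sqrt hγ.le
  have part1 : ∀ x ∈ Icc (0:ℝ) x₂,
      Lop γ g x ≤ (M + 1) / γ * Real.exp (-(a * x₂)) * Real.cosh (a * x) := by
    intro x hx
    obtain ⟨hx0, hxx₂⟩ := hx
    set f : ℝ → ℝ := fun s => G γ x s * g s with hf_def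
    have hGc : Continuous (fun s => G γ x s) := by
      unfold G
      fun_prop
    have hfm : Measurable f := (hGc.measurable).mul hm
    have hGnn : ∀ s, 0 ≤ G γ x s := fun s => by
      rw [← ha_def] at *
      exact mul_nonneg (mul_nonneg (by positivity) (Real.exp_pos _).le) (Real.cosh_pos _).le
    have hfnn : ∀ s, 0 ≤ f s := fun s => mul_nonneg (hGnn s) (hg s).1
    set C : ℝ := (M + 1) * ((1 / a) * Real.cosh (a * x)) with hC_def
    have hC : 0 ≤ C := by
      have := Real.cosh_pos (a * x)
      positivity
    have hbnd : ∀ s ∈ Ioi x₂, f s ≤ C * Real.exp (-(a * s)) := by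
      intro s hs
      have hxs : x ≤ s := le_trans hxx₂ (le_of_lt hs)
      have hGe : G γ x s = (1 / a) * Real.exp (-(a * s)) * Real.cosh (a * x) := by
        unfold G
        rw [← ha_def, max_eq_right hxs, min_eq_left hxs]
      show G γ x s * g s ≤ _
      rw [hGe, hC_def]
      have hpos : (0:ℝ) ≤ 1 / a * Real.exp (-(a * s)) * Real.cosh (a * x) := by
        have := Real.cosh_pos (a * x)
        positivity
      calc 1 / a * Real.exp (-(a * s)) * Real.cosh (a * x) * g s
          ≤ 1 / a * Real.exp (-(a * s)) * Real.cosh (a * x) * (M + 1) :=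
            mul_le_mul_of_nonneg_left (hg s).2 hpos
        _ = (M + 1) * (1 / a * Real.cosh (a * x)) * Real.exp (-(a * s)) := by ring
    have hIb : IntegrableOn (fun s => C * Real.exp (-(a * s))) (Ioi x₂) := by
      have := (exp_neg_integrableOn_Ioi x₂ ha).const_mul C
      simpa [neg_mul, mul_comm, IntegrableOn] using this
    have hIf : IntegrableOn f (Ioi x₂) := by
      refine hIb.mono' (hfm.aestronglyMeasurable) ?_
      filter_upwards [ae_restrict_mem measurableSet_Ioi] with s hs
      rw [Real.norm_eq_abs, abs_of_nonneg (hfnn s)]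
      exact hbnd s hs
    have heq : Lop γ g x = ∫ s in Ioi x₂, f s := by
      have h0 : ∀ᵐ s : ℝ, s ≠ x₂ := by
        rw [ae_iff]
        simp
      have hae : f =ᵐ[volume.restrict (Ioi (0:ℝ))] (Ioi x₂).indicator f := by
        refine ae_restrict_of_ae (h0.mono fun s hs => ?_)
        rcases lt_or_gt_of_ne hs with h | h
        · have hz : f s = 0 := by simp [hf_def, hsupp s h]
          rw [hz, indicator_of_notMem (notMem_Ioi.2 h.le)]
        · exact (indicator_of_mem h f).symm
      rw [Lop, integral_congr_ae hae, setIntegral_indicator measurableSet_Ioi,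
        inter_eq_right.2 (Ioi_subset_Ioi hx₂)]
    have hle : (∫ s in Ioi x₂, f s) ≤ ∫ s in Ioi x₂, C * Real.exp (-(a * s)) :=
      setIntegral_mono_on hIf hIb measurableSet_Ioi hbnd
    have hval : (∫ s in Ioi x₂, C * Real.exp (-(a * s))) = C * (Real.exp (-(a * x₂)) / a) := by
      rw [MeasureTheory.integral_const_mul, intExpIoi ha]
    have hfin : C * (Real.exp (-(a * x₂)) / a)
        = (M + 1) / γ * Real.exp (-(a * x₂)) * Real.cosh (a * x) := by
      rw [hC_def, ← haa]
      field_simp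
    calc Lop γ g x = ∫ s in Ioi x₂, f s := heq
      _ ≤ ∫ s in Ioi x₂, C * Real.exp (-(a * s)) := hle
      _ = C * (Real.exp (-(a * x₂)) / a) := hval
      _ = (M + 1) / γ * Real.exp (-(a * x₂)) * Real.cosh (a * x) := hfin
  refine ⟨part1, ?_⟩
  by_cases hI : IntervalIntegrable (Lop γ g) volume 0 x₂
  · have hBint : IntervalIntegrable
        (fun x => (M + 1) / γ * Real.exp (-(a * x₂)) * Real.cosh (a * x)) volume 0 x₂ := by
      apply Continuous.intervalIntegrable
      fun_prop
    have hmono := intervalIntegral.integral_mono_on hx₂ hI hBint part1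
    have hBval : (∫ x in (0:ℝ)..x₂, (M + 1) / γ * Real.exp (-(a * x₂)) * Real.cosh (a * x))
        = (M + 1) / γ * Real.exp (-(a * x₂)) * (Real.sinh (a * x₂) / a) := by
      rw [intervalIntegral.integral_const_mul, intCosh ha]
    set t := a * x₂ with ht_def
    have ht : 0 ≤ t := mul_nonneg ha.le hx₂
    have key : Real.exp (-t) * Real.sinh t ≤ 1 / 2 := by
      rw [Real.sinh_eq]
      have h1 : Real.exp (-t) * Real.exp t = 1 := by rw [← Real.exp_add]; simp
      nlinarith [Real.exp_pos (-t), sq_nonneg (Real.exp (-t))]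
    have hfac : 0 ≤ (M + 1) / (γ * a) := by positivity
    have hmul := mul_le_mul_of_nonneg_left key hfac
    have e1 : (M + 1) / γ * Real.exp (-t) * (Real.sinh t / a)
        = (M + 1) / (γ * a) * (Real.exp (-t) * Real.sinh t) := by ring
    have e2 : (M + 1) / (γ * a) * (1 / 2 : ℝ) = (M + 1) / (2 * γ * a) := by ring
    rw [hBval] at hmono
    linarith [hmono, e1 ▸ e2 ▸ hmul]
  · rw [intervalIntegral.integral_undef hI]
    apply div_nonneg h01
    positivity
end
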